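/- Let T : W → W be linear on a finite-dimensional real vector space splitting as a direct sum of T-eigenspaces with eigenvalues of absolute value ≠ 1, let W^cont and W^exp be the contracting and expanding subspaces, and let W⁺, W⁻ ⊆ W have dim W⁺ + dim W⁻ = dim W with W⁺ ∩ W^cont = 0 and W⁻ ∩ W^exp = 0. Then dim W⁺ = dim W^exp and dim W⁻ = dim W^cont, and as k → +∞ the subspaces T^k W⁺ converge to W^exp and T^{-k} W⁻ converge to W^cont (in the Grassmannian of W). -/

import Mathlib

open Filter Module Submodule

set_option maxHeartbeats 1000000
set_option synthInstance.maxHeartbeats 400000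
set_option maxRecDepth 8000

section Aux

variable {W : Type*} [NormedAddCommGroup W] [NormedSpace ℝ W] [FiniteDimensional ℝ W]

/-- Eigenspace of the inverse equiv. -/
lemma stc_eig_inv (T : W ≃ₗ[ℝ] W) {ν : ℝ} (hν : ν ≠ 0) :
    Module.End.eigenspace (T.symm : W →ₗ[ℝ] W) ν
      = Module.End.eigenspace (T : W →ₗ[ℝ] W) ν⁻¹ := by
  ext x
  simp only [Module.End.mem_eigenspace_iff, LinearEquiv.coe_coe]
  constructor
  · intro h
    rw [eq_comm, inv_smul_eq_iff₀ hν]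
    have := congrArg T h
    simpa [map_smul] using this
  · intro h
    have h2 := congrArg T.symm h
    simp only [T.symm_apply_apply, map_smul] at h2
    exact (inv_smul_eq_iff₀ hν).mp h2.symm

lemma stc_ctr_symm (T : W ≃ₗ[ℝ] W) :
    (⨆ μ ∈ {μ : ℝ | |μ| < 1}, Module.End.eigenspace (T.symm : W →ₗ[ℝ] W) μ)
      = ⨆ μ ∈ {μ : ℝ | 1 < |μ|}, Module.End.eigenspace (T : W →ₗ[ℝ] W) μ := by
  apply le_antisymm
  · refine iSup₂_le fun ν hν => ?_
    rcases eq_or_ne ν 0 with rfl | hν0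
    · rw [Module.End.eigenspace_zero]
      simp [LinearMap.ker_eq_bot_of_injective T.symm.injective]
    · rw [stc_eig_inv T hν0]
      refine le_iSup₂_of_le ν⁻¹ ?_ le_rfl
      simp only [Set.mem_setOf_eq, abs_inv] at *
      exact (one_lt_inv₀ (abs_pos.mpr hν0)).mpr hν
  · refine iSup₂_le fun μ hμ => ?_
    have hμ1 : (1:ℝ) < |μ| := hμ
    have hμ0 : μ ≠ 0 := by
      intro h; rw [h] at hμ1; simp at hμ1; linarith
    have hkey : Module.End.eigenspace (T : W →ₗ[ℝ] W) μ
        = Module.End.eigenspace (T.symm : W →ₗ[ℝ] W) μ⁻¹ := by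
      have := stc_eig_inv (T := T.symm) (ν := μ) hμ0
      rw [LinearEquiv.symm_symm] at this
      rw [this, stc_eig_inv T (inv_ne_zero hμ0), inv_inv]
    rw [hkey]
    refine le_iSup₂_of_le μ⁻¹ ?_ le_rfl
    simp only [Set.mem_setOf_eq, abs_inv]
    exact inv_lt_one_of_one_lt₀ hμ1

/-- eigenspaces of `f` are invariant under anything commuting with `f`; hence so are
their (bi)suprema. -/
lemma stc_comm_invariant (f g : W →ₗ[ℝ] W) (hfg : f ∘ₗ g = g ∘ₗ f) (s : Set ℝ) :
    ∀ x ∈ (⨆ μ ∈ s, Module.End.eigenspace f μ), g x ∈ ⨆ μ ∈ s, Module.End.eigenspace f μ := by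
  have hmap : Submodule.map g (⨆ μ ∈ s, Module.End.eigenspace f μ)
      ≤ ⨆ μ ∈ s, Module.End.eigenspace f μ := by
    simp only [Submodule.map_iSup]
    refine iSup₂_le fun μ hμ => le_iSup₂_of_le μ hμ ?_
    rintro _ ⟨x, hx, rfl⟩
    rw [SetLike.mem_coe] at hx
    rw [Module.End.mem_eigenspace_iff] at hx ⊢
    have := congrArg (fun h : W →ₗ[ℝ] W => h x) hfg
    simp only [LinearMap.comp_apply] at this
    rw [this, hx, map_smul]
  exact fun x hx => hmap ⟨x, hx, rfl⟩

lemma stc_pow_mem (g : W →ₗ[ℝ] W) (V : Submodule ℝ W) (hV : ∀ x ∈ V, g x ∈ V) (k : ℕ) :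
    ∀ x ∈ V, (g ^ k) x ∈ V := by
  induction k with
  | zero => intro x hx; simpa using hx
  | succ n ih =>
      intro x hx
      rw [pow_succ, Module.End.mul_apply]
      exact ih _ (hV x hx)

/-- Uniform contraction on the span of eigenspaces with eigenvalue of absolute value `< 1`. -/
lemma stc_key (S : W →ₗ[ℝ] W) {ε : ℝ} (hε : 0 < ε) :
    ∃ K : ℕ, ∀ k : ℕ, K ≤ k →
      ∀ x ∈ (⨆ μ ∈ {μ : ℝ | |μ| < 1}, Module.End.eigenspace S μ),
        ‖(S ^ k) x‖ ≤ ε * ‖x‖ := by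
  classical
  set C : Submodule ℝ W := ⨆ μ ∈ {μ : ℝ | |μ| < 1}, Module.End.eigenspace S μ with hCdef
  have hpt : ∀ x ∈ C, Tendsto (fun k : ℕ => (S ^ k) x) atTop (nhds 0) := by
    let P : Submodule ℝ W :=
      { carrier := {x | Tendsto (fun k : ℕ => (S ^ k) x) atTop (nhds 0)}
        add_mem' := fun {a b} ha hb => by simpa [map_add] using ha.add hb
        zero_mem' := by simpa [map_zero] using (tendsto_const_nhds :
          Tendsto (fun _ : ℕ => (0 : W)) atTop (nhds 0))
        smul_mem' := fun c {x} hx => by simpa [map_smul] using hx.const_smul c }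
    have hle : C ≤ P := by
      refine iSup₂_le fun μ hμ y hy => ?_
      have hyy : ∀ k : ℕ, (S ^ k) y = μ ^ k • y := by
        intro k
        induction k with
        | zero => simp
        | succ n ih =>
            rw [pow_succ', Module.End.mul_apply, ih, map_smul,
              Module.End.mem_eigenspace_iff.mp hy, smul_smul, pow_succ]
      have habs : |μ| < 1 := hμ
      have h0 := (tendsto_pow_atTop_nhds_zero_of_abs_lt_one habs).smul_const y
      show Tendsto (fun k : ℕ => (S ^ k) y) atTop (nhds 0)
      simpa [hyy] using h0
    exact fun x hx => hle hx
  let b := Module.finBasis ℝ C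
  let M : Fin (Module.finrank ℝ C) → ℝ := fun i => ‖LinearMap.toContinuousLinearMap (b.coord i)‖
  have hg : Tendsto (fun k : ℕ => ∑ i, M i * ‖(S ^ k) ((b i : C) : W)‖) atTop (nhds 0) := by
    have h : ∀ i ∈ Finset.univ, Tendsto (fun k : ℕ => M i * ‖(S ^ k) ((b i : C) : W)‖)
        atTop (nhds 0) := by
      intro i _
      have h0 := hpt ((b i : C) : W) (b i).2
      simpa using (h0.norm).const_mul (M i)
    simpa using tendsto_finset_sum Finset.univ h
  obtain ⟨K, hK⟩ := eventually_atTop.mp (hg.eventually (gt_mem_nhds hε))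
  refine ⟨K, fun k hk x hx => ?_⟩
  set y : C := ⟨x, hx⟩ with hy
  have hxy : x = ∑ i, b.repr y i • ((b i : C) : W) := by
    have h1 := congrArg (fun z : C => (z : W)) (b.sum_repr y)
    simp only [Submodule.coe_sum, Submodule.coe_smul] at h1
    exact h1.symm
  have hcoord : ∀ i, |b.repr y i| ≤ M i * ‖x‖ := by
    intro i
    have h1 := (LinearMap.toContinuousLinearMap (b.coord i)).le_opNorm y
    simpa [Real.norm_eq_abs] using h1
  calc ‖(S ^ k) x‖ = ‖∑ i, b.repr y i • (S ^ k) ((b i : C) : W)‖ := by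
        rw [hxy, map_sum]; simp [map_smul]
    _ ≤ ∑ i, ‖b.repr y i • (S ^ k) ((b i : C) : W)‖ := norm_sum_le _ _
    _ = ∑ i, |b.repr y i| * ‖(S ^ k) ((b i : C) : W)‖ := by
        simp [norm_smul, Real.norm_eq_abs]
    _ ≤ ∑ i, (M i * ‖x‖) * ‖(S ^ k) ((b i : C) : W)‖ := by
        refine Finset.sum_le_sum fun i _ => ?_
        exact mul_le_mul_of_nonneg_right (hcoord i) (norm_nonneg _)
    _ = (∑ i, M i * ‖(S ^ k) ((b i : C) : W)‖) * ‖x‖ := by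
        rw [Finset.sum_mul]; exact Finset.sum_congr rfl fun i _ => by ring
    _ ≤ ε * ‖x‖ := mul_le_mul_of_nonneg_right (le_of_lt (hK k hk)) (norm_nonneg x)

/-- Master convergence lemma. -/
lemma stc_master (T : W ≃ₗ[ℝ] W) (C E : Submodule ℝ W)
    (hC : C = ⨆ μ ∈ {μ : ℝ | |μ| < 1}, Module.End.eigenspace (T : W →ₗ[ℝ] W) μ)
    (hE : E = ⨆ μ ∈ {μ : ℝ | |μ| < 1}, Module.End.eigenspace (T.symm : W →ₗ[ℝ] W) μ)
    (hcompl : IsCompl C E)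
    (Wp : Submodule ℝ W) (hdisj : Wp ⊓ C = ⊥)
    (hrank : Module.finrank ℝ Wp = Module.finrank ℝ E)
    {ε : ℝ} (hε : 0 < ε) :
    ∃ K : ℕ, ∀ k : ℕ, K ≤ k →
      (∀ v ∈ Submodule.map ((T : W →ₗ[ℝ] W) ^ k) Wp, ∃ w ∈ E, ‖v - w‖ ≤ ε * ‖v‖) ∧
      (∀ w ∈ E, ∃ v ∈ Submodule.map ((T : W →ₗ[ℝ] W) ^ k) Wp, ‖v - w‖ ≤ ε * ‖w‖) := by
  classical
  -- invariance
  have hTS : (T : W →ₗ[ℝ] W) ∘ₗ (T.symm : W →ₗ[ℝ] W)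
      = (T.symm : W →ₗ[ℝ] W) ∘ₗ (T : W →ₗ[ℝ] W) := by
    ext x; simp
  have invE_T : ∀ x ∈ E, (T : W →ₗ[ℝ] W) x ∈ E := by
    rw [hE]; exact stc_comm_invariant _ _ hTS.symm _
  have invE_S : ∀ x ∈ E, (T.symm : W →ₗ[ℝ] W) x ∈ E := by
    rw [hE]; exact stc_comm_invariant _ _ rfl _
  -- projection and graph map
  set π := E.linearProjOfIsCompl C hcompl.symm with hπ
  have hker : LinearMap.ker π = C := Submodule.linearProjOfIsCompl_ker hcompl.symm
  set ρ : Wp →ₗ[ℝ] E := π ∘ₗ Wp.subtype with hρ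
  have hinj : Function.Injective ρ := by
    rw [← LinearMap.ker_eq_bot]
    refine LinearMap.ker_eq_bot'.mpr fun u hu => ?_
    have h1 : (u : W) ∈ C := by
      rw [← hker, LinearMap.mem_ker]
      exact hu
    have h2 : (u : W) ∈ Wp ⊓ C := ⟨u.2, h1⟩
    rw [hdisj] at h2
    exact Subtype.ext h2
  have hbij : Function.Bijective ρ :=
    ⟨hinj, (LinearMap.injective_iff_surjective_of_finrank_eq_finrank hrank).mp hinj⟩
  set g := LinearEquiv.ofBijective ρ hbij with hg
  set χ : E →ₗ[ℝ] W := Wp.subtype ∘ₗ (g.symm : E →ₗ[ℝ] Wp) - E.subtype with hχ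
  have hχ_apply : ∀ e : E, χ e = ((g.symm e : Wp) : W) - (e : W) := fun e => rfl
  have hπE : ∀ e : E, π (e : W) = e := fun e =>
    Submodule.linearProjOfIsCompl_apply_left hcompl.symm e
  have hρ_apply : ∀ u : Wp, ρ u = π (u : W) := fun u => rfl
  have hχC : ∀ e : E, χ e ∈ C := by
    intro e
    rw [← hker, LinearMap.mem_ker, hχ_apply, map_sub, hπE]
    have h1 : g (g.symm e) = e := g.apply_symm_apply e
    have h2 : ρ (g.symm e) = e := by
      rw [← LinearEquiv.ofBijective_apply (hf := hbij), ← hg, h1]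
    rw [← hρ_apply, h2, sub_self]
  -- norm constants
  set G : ℝ := ‖LinearMap.toContinuousLinearMap χ‖ with hGdef
  have hG0 : 0 ≤ G := by rw [hGdef]; exact norm_nonneg (LinearMap.toContinuousLinearMap χ)
  have hχ_bound : ∀ e : E, ‖χ e‖ ≤ G * ‖(e : W)‖ := by
    intro e
    have h1 := (LinearMap.toContinuousLinearMap χ).le_opNorm e
    simpa using h1
  set c0 : ℝ := min ε 1 / 2 with hc0def
  have hc0pos : 0 < c0 := by
    have := lt_min hε one_pos
    simp only [hc0def]; linarith
  have hc0ε : c0 ≤ ε / 2 := by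
    have := min_le_left ε 1; simp only [hc0def]; linarith
  have hc0half : c0 ≤ 1 / 2 := by
    have := min_le_right ε 1; simp only [hc0def]; linarith
  set η : ℝ := min ε 1 / (2 * (G + 1)) with hηdef
  have hηpos : 0 < η := by
    have h1 := lt_min hε one_pos
    apply div_pos h1; linarith
  have hηG : η * G ≤ c0 := by
    have h1 : η * (G + 1) = c0 := by
      rw [hηdef, hc0def]; field_simp
    nlinarith
  obtain ⟨K1, hK1⟩ := stc_key (T : W →ₗ[ℝ] W) hηpos
  obtain ⟨K2, hK2⟩ := stc_key (T.symm : W →ₗ[ℝ] W) one_pos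
  refine ⟨max K1 K2, fun k hk => ?_⟩
  have hk1 : K1 ≤ k := le_trans (le_max_left _ _) hk
  have hk2 : K2 ≤ k := le_trans (le_max_right _ _) hk
  have hEk : ∀ x ∈ E, ((T : W →ₗ[ℝ] W) ^ k) x ∈ E := stc_pow_mem _ _ invE_T k
  have hSk : ∀ x ∈ E, ((T.symm : W →ₗ[ℝ] W) ^ k) x ∈ E := stc_pow_mem _ _ invE_S k
  have hiter : ∀ x : W, ((T.symm : W →ₗ[ℝ] W) ^ k) (((T : W →ₗ[ℝ] W) ^ k) x) = x := by
    intro x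
    rw [Module.End.pow_apply, Module.End.pow_apply]
    exact Function.LeftInverse.iterate (g := (T.symm : W →ₗ[ℝ] W))
      (f := (T : W →ₗ[ℝ] W)) (fun y => T.symm_apply_apply y) k x
  have hiter' : ∀ x : W, ((T : W →ₗ[ℝ] W) ^ k) (((T.symm : W →ₗ[ℝ] W) ^ k) x) = x := by
    intro x
    rw [Module.End.pow_apply, Module.End.pow_apply]
    exact Function.LeftInverse.iterate (g := (T : W →ₗ[ℝ] W))
      (f := (T.symm : W →ₗ[ℝ] W)) (fun y => T.apply_symm_apply y) k x
  -- core estimate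
  have core : ∀ e : E, ‖((T : W →ₗ[ℝ] W) ^ k) (χ e)‖
      ≤ c0 * ‖((T : W →ₗ[ℝ] W) ^ k) (e : W)‖ := by
    intro e
    have h1 : ‖((T : W →ₗ[ℝ] W) ^ k) (χ e)‖ ≤ η * ‖χ e‖ := by
      refine hK1 k hk1 _ ?_
      rw [← hC]; exact hχC e
    have h3 : ‖(e : W)‖ ≤ 1 * ‖((T : W →ₗ[ℝ] W) ^ k) (e : W)‖ := by
      have hmem : ((T : W →ₗ[ℝ] W) ^ k) (e : W) ∈ E := hEk _ e.2
      have h4 := hK2 k hk2 _ (by rw [← hE]; exact hmem)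
      rwa [hiter] at h4
    calc ‖((T : W →ₗ[ℝ] W) ^ k) (χ e)‖ ≤ η * ‖χ e‖ := h1
      _ ≤ η * (G * ‖(e : W)‖) := mul_le_mul_of_nonneg_left (hχ_bound e) hηpos.le
      _ ≤ η * (G * (1 * ‖((T : W →ₗ[ℝ] W) ^ k) (e : W)‖)) := by
          refine mul_le_mul_of_nonneg_left (mul_le_mul_of_nonneg_left h3 hG0) hηpos.le
      _ = (η * G) * ‖((T : W →ₗ[ℝ] W) ^ k) (e : W)‖ := by ring
      _ ≤ c0 * ‖((T : W →ₗ[ℝ] W) ^ k) (e : W)‖ :=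
          mul_le_mul_of_nonneg_right hηG (norm_nonneg _)
  constructor
  · rintro v ⟨u, hu, rfl⟩
    set up : Wp := ⟨u, hu⟩ with hup
    set e : E := ρ up with he
    have hue : ((g.symm e : Wp) : W) = u := by
      have : g.symm e = up := by
        rw [he, show ρ up = g up from (LinearEquiv.ofBijective_apply (f := ρ) (hf := hbij) up).symm,
          g.symm_apply_apply]
      rw [this]
    have hχe : χ e = u - (e : W) := by rw [hχ_apply, hue]
    refine ⟨((T : W →ₗ[ℝ] W) ^ k) (e : W), hEk _ e.2, ?_⟩
    have hdiff : ((T : W →ₗ[ℝ] W) ^ k) u - ((T : W →ₗ[ℝ] W) ^ k) (e : W)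
        = ((T : W →ₗ[ℝ] W) ^ k) (χ e) := by
      rw [hχe, map_sub]
    set A := ‖((T : W →ₗ[ℝ] W) ^ k) u‖ with hA
    set B := ‖((T : W →ₗ[ℝ] W) ^ k) (e : W)‖ with hB
    set a := ‖((T : W →ₗ[ℝ] W) ^ k) u - ((T : W →ₗ[ℝ] W) ^ k) (e : W)‖ with ha
    have hcore : a ≤ c0 * B := by rw [ha, hdiff]; exact core e
    have htri : B ≤ A + a := by
      rw [hA, hB, ha]
      have := norm_sub_norm_le (((T : W →ₗ[ℝ] W) ^ k) u)
        (((T : W →ₗ[ℝ] W) ^ k) (e : W))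
      linarith [abs_le.mp (abs_norm_sub_norm_le (((T : W →ₗ[ℝ] W) ^ k) (e : W))
        (((T : W →ₗ[ℝ] W) ^ k) u)) |>.2, norm_sub_rev (((T : W →ₗ[ℝ] W) ^ k) u)
        (((T : W →ₗ[ℝ] W) ^ k) (e : W))]
    have hA0 : 0 ≤ A := norm_nonneg _
    have ha0 : 0 ≤ a := norm_nonneg _
    have hB0 : 0 ≤ B := norm_nonneg _
    show a ≤ ε * A
    nlinarith [mul_le_mul_of_nonneg_left htri hc0pos.le]
  · intro w hw
    have hw' : ((T.symm : W →ₗ[ℝ] W) ^ k) w ∈ E := hSk _ hw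
    set e : E := ⟨((T.symm : W →ₗ[ℝ] W) ^ k) w, hw'⟩ with he
    have hwe : ((T : W →ₗ[ℝ] W) ^ k) (e : W) = w := hiter' w
    refine ⟨((T : W →ₗ[ℝ] W) ^ k) ((g.symm e : Wp) : W),
      ⟨((g.symm e : Wp) : W), (g.symm e).2, rfl⟩, ?_⟩
    have hdiff : ((T : W →ₗ[ℝ] W) ^ k) ((g.symm e : Wp) : W) - w
        = ((T : W →ₗ[ℝ] W) ^ k) (χ e) := by
      rw [hχ_apply, map_sub, hwe]
    rw [hdiff]
    calc ‖((T : W →ₗ[ℝ] W) ^ k) (χ e)‖ ≤ c0 * ‖((T : W →ₗ[ℝ] W) ^ k) (e : W)‖ := core e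
      _ = c0 * ‖w‖ := by rw [hwe]
      _ ≤ ε * ‖w‖ := by
          refine mul_le_mul_of_nonneg_right ?_ (norm_nonneg _)
          linarith

end Aux

/-- First step of Lemma "unif_transverse": with `W` a direct sum of `T`-eigenspaces with
eigenvalues of absolute value `≠ 1`, `W^cont` and `W^exp` the contracting and expanding
subspaces, and `W⁺, W⁻` subspaces of complementary dimensions with `W⁺ ∩ W^cont = 0` and
`W⁻ ∩ W^exp = 0`, one has `dim W⁺ = dim W^exp`, `dim W⁻ = dim W^cont`, and `T^k W⁺ → W^exp`,
`T^{-k} W⁻ → W^cont` in the Grassmannian as `k → ∞`. -/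
theorem subspaces_converge_to_expanding_contracting
    (W : Type*) [NormedAddCommGroup W] [InnerProductSpace ℝ W] [FiniteDimensional ℝ W]
    (T : W ≃ₗ[ℝ] W)
    (hdiag : (⨆ μ ∈ {μ : ℝ | |μ| ≠ 1},
        Module.End.eigenspace (T : W →ₗ[ℝ] W) μ) = ⊤)
    (Wp Wm : Submodule ℝ W)
    (hdim : Module.finrank ℝ Wp + Module.finrank ℝ Wm = Module.finrank ℝ W)
    (hWp : Wp ⊓ (⨆ μ ∈ {μ : ℝ | |μ| < 1},
        Module.End.eigenspace (T : W →ₗ[ℝ] W) μ) = ⊥)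
    (hWm : Wm ⊓ (⨆ μ ∈ {μ : ℝ | 1 < |μ|},
        Module.End.eigenspace (T : W →ₗ[ℝ] W) μ) = ⊥) :
    Module.finrank ℝ Wp =
        Module.finrank ℝ (⨆ μ ∈ {μ : ℝ | 1 < |μ|},
          Module.End.eigenspace (T : W →ₗ[ℝ] W) μ : Submodule ℝ W) ∧
    Module.finrank ℝ Wm =
        Module.finrank ℝ (⨆ μ ∈ {μ : ℝ | |μ| < 1},
          Module.End.eigenspace (T : W →ₗ[ℝ] W) μ : Submodule ℝ W) ∧
    -- `T^k W⁺ → W^exp` in the Grassmannian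
    (∀ ε : ℝ, 0 < ε → ∃ K : ℕ, ∀ k : ℕ, K ≤ k →
      (∀ v ∈ Submodule.map ((T : W →ₗ[ℝ] W) ^ k) Wp,
        ∃ w ∈ (⨆ μ ∈ {μ : ℝ | 1 < |μ|},
          Module.End.eigenspace (T : W →ₗ[ℝ] W) μ : Submodule ℝ W), ‖v - w‖ ≤ ε * ‖v‖) ∧
      (∀ w ∈ (⨆ μ ∈ {μ : ℝ | 1 < |μ|},
          Module.End.eigenspace (T : W →ₗ[ℝ] W) μ : Submodule ℝ W),
        ∃ v ∈ Submodule.map ((T : W →ₗ[ℝ] W) ^ k) Wp, ‖v - w‖ ≤ ε * ‖w‖)) ∧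
    -- `T^{-k} W⁻ → W^cont` in the Grassmannian
    (∀ ε : ℝ, 0 < ε → ∃ K : ℕ, ∀ k : ℕ, K ≤ k →
      (∀ v ∈ Submodule.map ((T.symm : W →ₗ[ℝ] W) ^ k) Wm,
        ∃ w ∈ (⨆ μ ∈ {μ : ℝ | |μ| < 1},
          Module.End.eigenspace (T : W →ₗ[ℝ] W) μ : Submodule ℝ W), ‖v - w‖ ≤ ε * ‖v‖) ∧
      (∀ w ∈ (⨆ μ ∈ {μ : ℝ | |μ| < 1},
          Module.End.eigenspace (T : W →ₗ[ℝ] W) μ : Submodule ℝ W),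
        ∃ v ∈ Submodule.map ((T.symm : W →ₗ[ℝ] W) ^ k) Wm, ‖v - w‖ ≤ ε * ‖w‖)) := by
  classical
  set Cs : Submodule ℝ W :=
    ⨆ μ ∈ {μ : ℝ | |μ| < 1}, Module.End.eigenspace (T : W →ₗ[ℝ] W) μ with hCs
  set Es : Submodule ℝ W :=
    ⨆ μ ∈ {μ : ℝ | 1 < |μ|}, Module.End.eigenspace (T : W →ₗ[ℝ] W) μ with hEs
  have hset : {μ : ℝ | |μ| ≠ 1} = {μ : ℝ | |μ| < 1} ∪ {μ : ℝ | 1 < |μ|} := by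
    ext μ
    simp only [Set.mem_setOf_eq, Set.mem_union]
    exact ⟨fun h => lt_or_gt_of_ne h, fun h => h.elim ne_of_lt ne_of_gt⟩
  have hsup : Cs ⊔ Es = ⊤ := by
    rw [hCs, hEs, ← iSup_union, ← hset, hdiag]
  have h1 : Module.finrank ℝ Wp + Module.finrank ℝ Cs ≤ Module.finrank ℝ W :=
    Submodule.finrank_add_finrank_le_of_disjoint (disjoint_iff.mpr hWp)
  have h2 : Module.finrank ℝ Wm + Module.finrank ℝ Es ≤ Module.finrank ℝ W :=
    Submodule.finrank_add_finrank_le_of_disjoint (disjoint_iff.mpr hWm)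
  have h3 := Submodule.finrank_sup_add_finrank_inf_eq Cs Es
  rw [hsup, finrank_top] at h3
  have hrp : Module.finrank ℝ Wp = Module.finrank ℝ Es := by omega
  have hrm : Module.finrank ℝ Wm = Module.finrank ℝ Cs := by omega
  have hinf0 : Module.finrank ℝ (Cs ⊓ Es : Submodule ℝ W) = 0 := by omega
  have hdisjCE : Cs ⊓ Es = ⊥ := Submodule.finrank_eq_zero.mp hinf0
  have hcompl : IsCompl Cs Es := ⟨disjoint_iff.mpr hdisjCE, codisjoint_iff.mpr hsup⟩
  have hEs' : Es = ⨆ μ ∈ {μ : ℝ | |μ| < 1},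
      Module.End.eigenspace (T.symm : W →ₗ[ℝ] W) μ := (stc_ctr_symm T).symm
  have hCs' : Cs = ⨆ μ ∈ {μ : ℝ | |μ| < 1},
      Module.End.eigenspace ((T.symm).symm : W →ₗ[ℝ] W) μ := by
    rw [LinearEquiv.symm_symm]
  refine ⟨hrp, hrm, ?_, ?_⟩
  · intro ε hε
    exact stc_master T Cs Es rfl hEs' hcompl Wp hWp hrp hε
  · intro ε hε
    exact stc_master T.symm Es Cs hEs' hCs' hcompl.symm Wm hWm hrm hε
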